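/- In a median graph G with a fixed basepoint v₀, for every vertex v the set ℰ⁻(v) of Θ-classes of edges ingoing to v is a POF, and v together with all its ingoing edges is contained in an induced hypercube of G whose edge Θ-classes are exactly the classes of ℰ⁻(v) and whose anti-basis is v. -/

import Mathlib

namespace MedianPaper

variable {V : Type*}

/-- The metric interval `I(u,v)`: vertices on shortest `(u,v)`-paths. -/
def interval (G : SimpleGraph V) (u v : V) : Set V :=
  {w | G.dist u w + G.dist w v = G.dist u v}

/-- A median graph: a connected graph in which every triple of vertices
has a unique median. -/
def MedianGraph (G : SimpleGraph V) : Prop :=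
  G.Connected ∧ ∀ x y z : V, ∃! m : V,
    m ∈ interval G x y ∧ m ∈ interval G y z ∧ m ∈ interval G z x

/-- `u v x y` span a 4-cycle `u-v-y-x-u`, with opposite edge pairs
`(uv, xy)` and `(ux, vy)`. -/
def IsSquare (G : SimpleGraph V) (u v x y : V) : Prop :=
  G.Adj u v ∧ G.Adj x y ∧ G.Adj u x ∧ G.Adj v y ∧ u ≠ y ∧ v ≠ x

/-- Two edges are in relation Θ₀ if they are opposite edges of a common 4-cycle. -/
def Theta0 (G : SimpleGraph V) (e f : Sym2 V) : Prop :=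
  ∃ u v x y : V, IsSquare G u v x y ∧ e = s(u, v) ∧ f = s(x, y)

/-- Θ : the reflexive-transitive closure of Θ₀ on the edges of `G`. -/
def Theta (G : SimpleGraph V) (e f : Sym2 V) : Prop :=
  e ∈ G.edgeSet ∧ f ∈ G.edgeSet ∧ Relation.ReflTransGen (Theta0 G) e f

/-- The Θ-classes of `G`: equivalence classes of edges under Θ. -/
def ThetaClass (G : SimpleGraph V) (C : Set (Sym2 V)) : Prop :=
  ∃ e ∈ G.edgeSet, C = {f | Theta G e f}

/-- The edge set `C` separates `u` from `v` : they lie in different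
components of `G` minus `C`. -/
def Separates (G : SimpleGraph V) (C : Set (Sym2 V)) (u v : V) : Prop :=
  ¬ (G.deleteEdges C).Reachable u v

/-- The signature `σ_{u,v}`: Θ-classes separating `u` from `v`. -/
def signature (G : SimpleGraph V) (u v : V) : Set (Set (Sym2 V)) :=
  {C | ThetaClass G C ∧ Separates G C u v}

/-- `H`, `H'` are the two connected components (halfspaces) of `G` deprived
of the edges in `C`. -/
def IsHalfspacePair (G : SimpleGraph V) (C : Set (Sym2 V)) (H H' : Set V) : Prop :=
  H.Nonempty ∧ H'.Nonempty ∧ Disjoint H H' ∧ H ∪ H' = Set.univ ∧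
  (∀ x ∈ H, ∀ y ∈ H, (G.deleteEdges C).Reachable x y) ∧
  (∀ x ∈ H', ∀ y ∈ H', (G.deleteEdges C).Reachable x y) ∧
  (∀ x ∈ H, ∀ y ∈ H', ¬ (G.deleteEdges C).Reachable x y)

/-- The boundary of a halfspace `H` of the Θ-class `C` : vertices of `H`
incident to an edge of `C`. -/
def boundarySet (G : SimpleGraph V) (C : Set (Sym2 V)) (H : Set V) : Set V :=
  {x | x ∈ H ∧ ∃ y, G.Adj x y ∧ s(x, y) ∈ C}

/-- Orthogonality of Θ-classes: there is a common square using both. -/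
def Orthogonal (G : SimpleGraph V) (C₁ C₂ : Set (Sym2 V)) : Prop :=
  ∃ u v x y : V, IsSquare G u v x y ∧
    s(u, v) ∈ C₁ ∧ s(x, y) ∈ C₁ ∧ s(u, x) ∈ C₂ ∧ s(v, y) ∈ C₂

/-- A pairwise orthogonal family (POF) of Θ-classes. -/
def IsPOF (G : SimpleGraph V) (X : Set (Set (Sym2 V))) : Prop :=
  (∀ C ∈ X, ThetaClass G C) ∧
  ∀ C ∈ X, ∀ C' ∈ X, C ≠ C' → Orthogonal G C C'

/-- The `k`-dimensional hypercube graph, on subsets of `{1,…,k}`;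
two subsets are adjacent iff their symmetric difference has one element. -/
def cubeGraph (k : ℕ) : SimpleGraph (Finset (Fin k)) where
  Adj A B := (symmDiff A B).card = 1
  symm := by
    constructor
    intro A B h
    rwa [symmDiff_comm] at h
  loopless := by
    constructor
    intro A h
    simp [symmDiff_self] at h

/-- `S` induces a hypercube of dimension `k` in `G`. -/
def IsCubeDim (G : SimpleGraph V) (S : Set V) (k : ℕ) : Prop :=
  Nonempty ((G.induce S) ≃g cubeGraph k)

/-- `S` induces a hypercube in `G`. -/
def IsInducedCube (G : SimpleGraph V) (S : Set V) : Prop :=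
  ∃ k, IsCubeDim G S k

/-- The dimension of `G` is `d`: the largest dimension of an induced hypercube. -/
def GraphDim (G : SimpleGraph V) (d : ℕ) : Prop :=
  (∃ S : Set V, IsCubeDim G S d) ∧ ∀ (S : Set V) (k : ℕ), IsCubeDim G S k → k ≤ d

/-- The Θ-classes of the edges of the induced subgraph on `S`. -/
def cubeClasses (G : SimpleGraph V) (S : Set V) : Set (Set (Sym2 V)) :=
  {C | ThetaClass G C ∧ ∃ x ∈ S, ∃ y ∈ S, G.Adj x y ∧ s(x, y) ∈ C}

/-- With the `v₀`-orientation, `b ∈ S` is the basis of `S`: all edges of `S`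
incident to `b` are outgoing from `b`. -/
def IsBasis (G : SimpleGraph V) (v₀ : V) (S : Set V) (b : V) : Prop :=
  b ∈ S ∧ ∀ w ∈ S, G.Adj b w → G.dist v₀ b < G.dist v₀ w

/-- With the `v₀`-orientation, `b ∈ S` is the anti-basis of `S`: all edges of `S`
incident to `b` are ingoing to `b`. -/
def IsAntiBasis (G : SimpleGraph V) (v₀ : V) (S : Set V) (b : V) : Prop :=
  b ∈ S ∧ ∀ w ∈ S, G.Adj b w → G.dist v₀ w < G.dist v₀ b

/-- `ℰ⁻(v)` : the Θ-classes containing at least one edge ingoing to `v`. -/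
def inClasses (G : SimpleGraph V) (v₀ v : V) : Set (Set (Sym2 V)) :=
  {C | ThetaClass G C ∧ ∃ u, G.Adj u v ∧ G.dist v₀ u < G.dist v₀ v ∧ s(u, v) ∈ C}

/-- The ladder set `L_{u,v}`: classes of the signature `σ_{u,v}` having an
edge incident to `u`. -/
def ladder (G : SimpleGraph V) (u v : V) : Set (Set (Sym2 V)) :=
  {C | C ∈ signature G u v ∧ ∃ w, G.Adj u w ∧ s(u, w) ∈ C}

/-- A POF each of whose classes has an edge outgoing from `u`. -/
def OutgoingPOF (G : SimpleGraph V) (v₀ u : V) (L : Set (Set (Sym2 V))) : Prop :=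
  IsPOF G L ∧ ∀ C ∈ L, ∃ w, G.Adj u w ∧ G.dist v₀ u < G.dist v₀ w ∧ s(u, w) ∈ C

/-- A POF each of whose classes has an edge ingoing to `u`. -/
def IngoingPOF (G : SimpleGraph V) (v₀ u : V) (X : Set (Set (Sym2 V))) : Prop :=
  IsPOF G X ∧ ∀ C ∈ X, ∃ w, G.Adj w u ∧ G.dist v₀ w < G.dist v₀ u ∧ s(w, u) ∈ C

/-- `m` is a median of the triple `x, y, z`. -/
def IsMedian (G : SimpleGraph V) (x y z m : V) : Prop :=
  m ∈ interval G x y ∧ m ∈ interval G y z ∧ m ∈ interval G z x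

/-- `b` is the milestone following `a` on the way to `v`: `b` is the anti-basis of
the induced hypercube with basis `a` whose Θ-classes are the ladder set `L_{a,v}`. -/
def NextMilestone (G : SimpleGraph V) (v₀ v a b : V) : Prop :=
  ∃ S : Set V, IsInducedCube G S ∧ IsBasis G v₀ S a ∧ IsAntiBasis G v₀ S b ∧
    cubeClasses G S = ladder G a v

/-- The milestone set `Π(u,v)`: vertices obtained from `u` by iterating the
next-milestone step towards `v`. -/
def MilestoneSet (G : SimpleGraph V) (v₀ u v : V) : Set V :=
  {p | Relation.ReflTransGen (fun a b => NextMilestone G v₀ v a b) u p}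

/-- The penultimate milestone `π̄(u,v)`: the milestone of `Π(u,v)` other than `v`
closest to `v`, i.e. whose next milestone is `v` itself. -/
def IsPenultimate (G : SimpleGraph V) (v₀ u v p : V) : Prop :=
  p ∈ MilestoneSet G v₀ u v ∧ p ≠ v ∧ NextMilestone G v₀ v p v

/-- A convex set of vertices. -/
def ConvexSet (G : SimpleGraph V) (H : Set V) : Prop :=
  ∀ u ∈ H, ∀ v ∈ H, interval G u v ⊆ H

/-- A gated set of vertices: each vertex has a gate in `H`. -/
def GatedSet (G : SimpleGraph V) (H : Set V) : Prop :=
  ∀ x : V, ∃ g ∈ H, ∀ h ∈ H, g ∈ interval G x h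


section Aux
variable {G : SimpleGraph V}

lemma mem_interval_iff {x y w : V} :
    w ∈ interval G x y ↔ G.dist x w + G.dist w y = G.dist x y := Iff.rfl

noncomputable def med (hmed : MedianGraph G) (x y z : V) : V :=
  (hmed.2 x y z).exists.choose

lemma med_spec (hmed : MedianGraph G) (x y z : V) :
    med hmed x y z ∈ interval G x y ∧ med hmed x y z ∈ interval G y z ∧
      med hmed x y z ∈ interval G z x :=
  (hmed.2 x y z).exists.choose_spec

lemma med_eq (hmed : MedianGraph G) {x y z m : V}
    (h1 : G.dist x m + G.dist m y = G.dist x y)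
    (h2 : G.dist y m + G.dist m z = G.dist y z)
    (h3 : G.dist z m + G.dist m x = G.dist z x) :
    m = med hmed x y z :=
  (hmed.2 x y z).unique ⟨h1, h2, h3⟩ (med_spec hmed x y z)

lemma dist_comm' (G : SimpleGraph V) (a b : V) : G.dist a b = G.dist b a :=
  SimpleGraph.dist_comm

lemma adj_dist_ne (hmed : MedianGraph G) {a b : V} (hab : G.Adj a b) (c : V) :
    G.dist c a ≠ G.dist c b := by
  intro h
  have hd : G.dist a b = 1 := SimpleGraph.dist_eq_one_iff_adj.mpr hab
  obtain ⟨h1, h2, h3⟩ := med_spec hmed a b c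
  rw [mem_interval_iff] at h1 h2 h3
  have : G.dist a (med hmed a b c) = 0 ∨ G.dist (med hmed a b c) b = 0 := by omega
  rcases this with h0 | h0
  · have he : a = med hmed a b c := (hmed.1.dist_eq_zero_iff).mp h0
    rw [← he] at h2
    rw [dist_comm' G b a, dist_comm' G a c, dist_comm' G b c] at h2
    omega
  · have he : med hmed a b c = b := (hmed.1.dist_eq_zero_iff).mp h0
    rw [he] at h3
    rw [dist_comm' G b a] at h3
    omega

lemma adj_dist_succ (hmed : MedianGraph G) {a b : V} (hab : G.Adj a b) (c : V) :
    G.dist c b = G.dist c a + 1 ∨ G.dist c a = G.dist c b + 1 := by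
  have hd : G.dist a b = 1 := SimpleGraph.dist_eq_one_iff_adj.mpr hab
  have h1 : G.dist c b ≤ G.dist c a + G.dist a b := hmed.1.dist_triangle
  have h2 : G.dist c a ≤ G.dist c b + G.dist b a := hmed.1.dist_triangle
  rw [dist_comm' G b a] at h2
  have h3 := adj_dist_ne hmed hab c
  omega

lemma walk_parity (hmed : MedianGraph G) (c : V) {x y : V} (p : G.Walk x y) :
    (p.length + G.dist c x + G.dist c y) % 2 = 0 := by
  induction p with
  | nil => simp only [SimpleGraph.Walk.length_nil]; omega
  | cons h p ih =>
    have := adj_dist_succ hmed h c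
    simp only [SimpleGraph.Walk.length_cons]
    omega

lemma dist_parity (hmed : MedianGraph G) (c x y : V) :
    (G.dist x y + G.dist c x + G.dist c y) % 2 = 0 := by
  obtain ⟨p, hp⟩ := hmed.1.exists_walk_length_eq_dist x y
  have := walk_parity hmed c p
  omega

lemma downward_square (hmed : MedianGraph G) (v₀ : V) {u w v : V}
    (hu : G.Adj u v) (hw : G.Adj w v)
    (hru : G.dist v₀ u + 1 = G.dist v₀ v) (hrw : G.dist v₀ w + 1 = G.dist v₀ v)
    (hne : u ≠ w) :
    G.dist u w = 2 ∧
    G.Adj (med hmed v₀ u w) u ∧ G.Adj (med hmed v₀ u w) w ∧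
      G.dist v₀ (med hmed v₀ u w) + 2 = G.dist v₀ v := by
  have hd2 : G.dist u w = 2 := by
    have h1 : G.dist u w ≤ G.dist u v + G.dist v w := hmed.1.dist_triangle
    rw [SimpleGraph.dist_eq_one_iff_adj.mpr hu, dist_comm' G v w,
      SimpleGraph.dist_eq_one_iff_adj.mpr hw] at h1
    have h0 : G.dist u w ≠ 0 := fun h => hne (hmed.1.dist_eq_zero_iff.mp h)
    have hp := dist_parity hmed v₀ u w
    omega
  obtain ⟨h1, h2, h3⟩ := med_spec hmed v₀ u w
  rw [mem_interval_iff] at h1 h2 h3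
  set m := med hmed v₀ u w with hm
  rw [hd2] at h2
  have e1 : G.dist m u = 1 ∧ G.dist m w = 1 ∧ G.dist v₀ m + 2 = G.dist v₀ v := by
    rw [dist_comm' G u m] at h2
    rw [dist_comm' G w m, dist_comm' G m v₀, dist_comm' G w v₀] at h3
    omega
  exact ⟨hd2, SimpleGraph.dist_eq_one_iff_adj.mp e1.1,
    SimpleGraph.dist_eq_one_iff_adj.mp e1.2.1, e1.2.2⟩

end Aux

section SD
variable {α : Type*} [DecidableEq α] {A B : Finset α} {w w1 w2 : α}

lemma sd_erase_left (hA : w ∈ A) (hB : w ∉ B) :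
    symmDiff (A.erase w) B = (symmDiff A (B)).erase w := by
  ext x
  by_cases hx : x = w
  · subst hx; simp [Finset.mem_symmDiff, hA, hB]
  · simp [Finset.mem_symmDiff, Finset.mem_erase, hx]

lemma sd_insert_left (hA : w ∉ A) (hB : w ∈ B) :
    symmDiff (insert w A) B = (symmDiff A (B)).erase w := by
  ext x
  by_cases hx : x = w
  · subst hx; simp [Finset.mem_symmDiff, hA, hB]
  · simp [Finset.mem_symmDiff, Finset.mem_erase, hx]

lemma sd_insert_new (hA : w ∉ A) (hB : w ∉ B) :
    symmDiff (insert w A) B = insert w (symmDiff A (B)) := by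
  ext x
  by_cases hx : x = w
  · subst hx; simp [Finset.mem_symmDiff, hA, hB]
  · simp [Finset.mem_symmDiff, Finset.mem_insert, hx]

lemma sd_erase_both (hA : w ∈ A) (hB : w ∈ B) :
    symmDiff A (B )= symmDiff (A.erase w) (B.erase w) := by
  ext x
  by_cases hx : x = w
  · subst hx; simp [Finset.mem_symmDiff, hA, hB]
  · simp [Finset.mem_symmDiff, Finset.mem_erase, hx]

lemma sd_erase_in (hA : w ∈ A) (hB : w ∈ B) :
    symmDiff (A.erase w) B = insert w (symmDiff A (B)) := by
  ext x
  by_cases hx : x = w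
  · subst hx; simp [Finset.mem_symmDiff, hA, hB]
  · simp [Finset.mem_symmDiff, Finset.mem_erase, Finset.mem_insert, hx]

lemma sd_two (h1 : w1 ∈ A) (h2 : w2 ∈ A) (hne : w1 ≠ w2) :
    symmDiff (A.erase w1) (A.erase w2) = {w1, w2} := by
  ext x
  by_cases hx1 : x = w1
  · subst hx1; simp [Finset.mem_symmDiff, h1, h2, hne]
  · by_cases hx2 : x = w2
    · subst hx2; simp [Finset.mem_symmDiff, h1, h2, (Ne.symm hne)]
    · simp [Finset.mem_symmDiff, Finset.mem_erase, hx1, hx2]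

lemma sd_self' (A : Finset α) : symmDiff A (A )= ∅ := by
  rw [symmDiff_self]; rfl

lemma sd_empty (A : Finset α) : symmDiff A (∅ )= A := by
  rw [show (∅ : Finset α) = ⊥ from rfl, symmDiff_bot]

lemma sd_card (A B : Finset α) : (symmDiff A (B)).card = (A \ B).card + (B \ A).card := by
  rw [symmDiff_def, Finset.sup_eq_union]
  exact Finset.card_union_of_disjoint (Finset.disjoint_left.mpr (by
    intro a ha hb
    simp only [Finset.mem_sdiff] at ha hb
    exact ha.2 hb.1))

lemma sd_card_parity (A B : Finset α) : ((symmDiff A (B)).card + A.card + B.card) % 2 = 0 := by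
  have h1 := Finset.card_sdiff_add_card_inter A B
  have h2 := Finset.card_sdiff_add_card_inter B A
  rw [Finset.inter_comm] at h2
  have := sd_card A B
  omega

end SD

section Cube
variable {G : SimpleGraph V} [DecidableEq V]

lemma sd_erase_self {A : Finset V} {w : V} (h : w ∈ A) :
    symmDiff (A.erase w) A = {w} := by
  rw [sd_erase_in h h, sd_self']; rfl

set_option maxHeartbeats 2000000 in
lemma cube_family (hmed : MedianGraph G) (v₀ v : V) (W : Finset V)
    (hW : ∀ u ∈ W, G.Adj u v ∧ G.dist v₀ u + 1 = G.dist v₀ v) :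
    ∃ F : Finset V → V, F ∅ = v ∧ (∀ u ∈ W, F {u} = u) ∧
      (∀ A B : Finset V, A ⊆ W → B ⊆ W →
        G.dist (F A) (F B) = (symmDiff A B).card) ∧
      (∀ A : Finset V, A ⊆ W → G.dist v₀ (F A) + A.card = G.dist v₀ v) := by
  revert hW
  induction W using Finset.induction_on with
  | empty =>
    intro _
    refine ⟨fun _ => v, rfl, by simp, ?_, ?_⟩
    · intro A B hA hB
      rw [Finset.subset_empty] at hA hB
      subst hA; subst hB
      rw [sd_self']
      simp [SimpleGraph.dist_self]
    · intro A hA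
      rw [Finset.subset_empty] at hA
      subst hA
      simp [SimpleGraph.dist_self]
  | @insert u W' hu ih =>
    intro hW
    obtain ⟨hadj_u, hrk_u⟩ := hW u (Finset.mem_insert_self u W')
    have hW' : ∀ w ∈ W', G.Adj w v ∧ G.dist v₀ w + 1 = G.dist v₀ v :=
      fun w hw => hW w (Finset.mem_insert_of_mem hw)
    obtain ⟨F, hF0, hF1, hFd, hFr⟩ := ih hW'
    have hdvu : G.dist v u = 1 := by
      rw [dist_comm' G v u]; exact SimpleGraph.dist_eq_one_iff_adj.mpr hadj_u
    -- distance from cube vertices to v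
    have hdistv : ∀ A : Finset V, A ⊆ W' → G.dist (F A) v = A.card := by
      intro A hA
      have h := hFd A ∅ hA (Finset.empty_subset _)
      rw [hF0, sd_empty] at h
      exact h
    -- Step 1 : goodness
    have good : ∀ n (A : Finset V), A ⊆ W' → A.card = n →
        G.dist (F A) u = n + 1 := by
      intro n
      induction n using Nat.strong_induction_on with
      | _ n ihn =>
        intro A hAW hcard
        have hrkA : G.dist v₀ (F A) + n = G.dist v₀ v := hcard ▸ hFr A hAW
        have hdAv : G.dist (F A) v = n := hcard ▸ hdistv A hAW
        have hub : G.dist (F A) u ≤ G.dist (F A) v + G.dist v u :=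
          hmed.1.dist_triangle
        have hlb : G.dist (F A) v ≤ G.dist (F A) u + G.dist u v :=
          hmed.1.dist_triangle
        rw [dist_comm' G u v] at hlb
        have hpar := dist_parity hmed v₀ (F A) u
        by_contra hbad
        have hd : G.dist (F A) u + 1 = n := by omega
        match n, hd, hcard, hrkA, hdAv, hbad, ihn with
        | 0, hd, hcard, hrkA, hdAv, hbad, ihn => omega
        | 1, hd, hcard, hrkA, hdAv, hbad, ihn =>
          obtain ⟨w, hw⟩ := Finset.card_eq_one.mp hcard
          subst hw
          have hwW : w ∈ W' := hAW (Finset.mem_singleton_self w)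
          rw [hF1 w hwW] at hd
          have : w = u := hmed.1.dist_eq_zero_iff.mp (by omega)
          exact hu (this ▸ hwW)
        | Nat.succ (Nat.succ m), hd, hcard, hrkA, hdAv, hbad, ihn =>
        obtain ⟨w1, hw1, w2, hw2, hne12⟩ := Finset.one_lt_card.mp
          (show 1 < A.card by omega)
        have hw2e : w2 ∈ A.erase w1 := Finset.mem_erase.mpr ⟨(Ne.symm hne12), hw2⟩
        have hA1 : A.erase w1 ⊆ W' := (Finset.erase_subset _ _).trans hAW
        have hA2 : A.erase w2 ⊆ W' := (Finset.erase_subset _ _).trans hAW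
        have hA12 : (A.erase w1).erase w2 ⊆ W' := (Finset.erase_subset _ _).trans hA1
        have hc1 : (A.erase w1).card = m + 1 := by
          have := Finset.card_erase_add_one hw1; omega
        have hc2 : (A.erase w2).card = m + 1 := by
          have := Finset.card_erase_add_one hw2; omega
        have hc12 : ((A.erase w1).erase w2).card = m := by
          have := Finset.card_erase_add_one hw2e; omega
        have d1 : G.dist (F (A.erase w1)) u = (m + 1) + 1 :=
          ihn (m + 1) (by omega) _ hA1 hc1
        have d2 : G.dist (F (A.erase w2)) u = (m + 1) + 1 :=
          ihn (m + 1) (by omega) _ hA2 hc2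
        have d12 : G.dist (F ((A.erase w1).erase w2)) u = m + 1 :=
          ihn m (by omega) _ hA12 hc12
        -- cube distances
        have e1A : G.dist (F (A.erase w1)) (F A) = 1 := by
          rw [hFd _ _ hA1 hAW, sd_erase_self hw1]; exact Finset.card_singleton w1
        have e2A : G.dist (F (A.erase w2)) (F A) = 1 := by
          rw [hFd _ _ hA2 hAW, sd_erase_self hw2]; exact Finset.card_singleton w2
        have e12 : G.dist (F (A.erase w1)) (F (A.erase w2)) = 2 := by
          rw [hFd _ _ hA1 hA2, sd_two hw1 hw2 hne12]; exact Finset.card_pair hne12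
        have e1_12 : G.dist (F (A.erase w1)) (F ((A.erase w1).erase w2)) = 1 := by
          rw [hFd _ _ hA1 hA12, symmDiff_comm, sd_erase_self hw2e]
          exact Finset.card_singleton w2
        have e2_12 : G.dist (F (A.erase w2)) (F ((A.erase w1).erase w2)) = 1 := by
          rw [hFd _ _ hA2 hA12]
          rw [show (A.erase w1).erase w2 = (A.erase w2).erase w1 from Finset.erase_right_comm]
          rw [symmDiff_comm, sd_erase_self (Finset.mem_erase.mpr ⟨hne12, hw1⟩)]
          exact Finset.card_singleton w1
        -- two medians of (F A1, F A2, u)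
        have hmedy : F A = med hmed (F (A.erase w1)) (F (A.erase w2)) u := by
          apply med_eq hmed
          · rw [e12, e1A, dist_comm' G (F A) (F (A.erase w2)), e2A]
          · rw [e2A, d2]; omega
          · rw [dist_comm' G u (F A), dist_comm' G (F A) (F (A.erase w1)), e1A,
              dist_comm' G u (F (A.erase w1)), d1]
            omega
        have hmedx : F ((A.erase w1).erase w2) =
            med hmed (F (A.erase w1)) (F (A.erase w2)) u := by
          apply med_eq hmed
          · rw [e12, e1_12, dist_comm' G (F ((A.erase w1).erase w2)) (F (A.erase w2)),
              e2_12]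
          · rw [e2_12, d2, d12]; omega
          · rw [dist_comm' G u (F ((A.erase w1).erase w2)), d12,
              dist_comm' G (F ((A.erase w1).erase w2)) (F (A.erase w1)), e1_12,
              dist_comm' G u (F (A.erase w1)), d1]
        have heq : F A = F ((A.erase w1).erase w2) := by rw [hmedy, hmedx]
        have hr12 : G.dist v₀ (F ((A.erase w1).erase w2)) + m = G.dist v₀ v :=
          hc12 ▸ hFr _ hA12
        rw [← heq] at hr12
        omega
    -- Step 2 : basic properties of the lowered vertices
    have mprop : ∀ A : Finset V, A ⊆ W' →
        G.dist (F A) (med hmed v₀ (F A) u) = 1 ∧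
        G.dist (med hmed v₀ (F A) u) u = A.card ∧
        G.dist v₀ (med hmed v₀ (F A) u) + (A.card + 1) = G.dist v₀ v := by
      intro A hA
      obtain ⟨h1, h2, h3⟩ := med_spec hmed v₀ (F A) u
      rw [mem_interval_iff] at h1 h2 h3
      have hg : G.dist (F A) u = A.card + 1 := good A.card A hA rfl
      have hr : G.dist v₀ (F A) + A.card = G.dist v₀ v := hFr A hA
      rw [dist_comm' G (med hmed v₀ (F A) u) (F A)] at h1
      rw [dist_comm' G u (med hmed v₀ (F A) u), dist_comm' G (med hmed v₀ (F A) u) v₀,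
        dist_comm' G u v₀] at h3
      omega
    have m_empty : med hmed v₀ (F ∅) u = u := by
      rw [hF0]
      refine (med_eq hmed ?_ ?_ ?_).symm
      · rw [SimpleGraph.dist_eq_one_iff_adj.mpr hadj_u]; omega
      · rw [SimpleGraph.dist_self]; omega
      · rw [SimpleGraph.dist_self]; omega
    -- Step 3 : adjacency of lowered vertices along cube edges
    have madj : ∀ A : Finset V, A ⊆ W' → ∀ w ∈ W', w ∉ A →
        G.dist (med hmed v₀ (F A) u) (med hmed v₀ (F (insert w A)) u) = 1 := by
      intro A hA w hwW hwA
      have hins : insert w A ⊆ W' := Finset.insert_subset hwW hA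
      have hcins : (insert w A).card = A.card + 1 := Finset.card_insert_of_notMem hwA
      obtain ⟨ma1, ma2, ma3⟩ := mprop A hA
      have dyx : G.dist (F (insert w A)) (F A) = 1 := by
        rw [hFd _ _ hins hA, sd_insert_new hwA hwA, sd_self']
        exact Finset.card_singleton w
      have dyu : G.dist (F (insert w A)) u = (A.card + 1) + 1 :=
        hcins ▸ good (insert w A).card _ hins rfl
      have dry : G.dist v₀ (F (insert w A)) + (A.card + 1) = G.dist v₀ v :=
        hcins ▸ hFr _ hins
      have dym : G.dist (F (insert w A)) (med hmed v₀ (F A) u) = 2 := by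
        have t1 : G.dist (F (insert w A)) (med hmed v₀ (F A) u) ≤
            G.dist (F (insert w A)) (F A) + G.dist (F A) (med hmed v₀ (F A) u) :=
          hmed.1.dist_triangle
        have t2 : G.dist (F (insert w A)) u ≤
            G.dist (F (insert w A)) (med hmed v₀ (F A) u) +
              G.dist (med hmed v₀ (F A) u) u := hmed.1.dist_triangle
        omega
      obtain ⟨z1, z2, z3⟩ := med_spec hmed v₀ (F (insert w A)) (med hmed v₀ (F A) u)
      rw [mem_interval_iff] at z1 z2 z3
      rw [dym] at z2
      have hz : G.dist (F (insert w A)) (med hmed v₀ (F (insert w A)) (med hmed v₀ (F A) u)) = 1 ∧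
          G.dist (med hmed v₀ (F (insert w A)) (med hmed v₀ (F A) u)) (med hmed v₀ (F A) u) = 1 ∧
          G.dist v₀ (med hmed v₀ (F (insert w A)) (med hmed v₀ (F A) u)) + (A.card + 2) =
            G.dist v₀ v := by
        rw [dist_comm' G (med hmed v₀ (F (insert w A)) (med hmed v₀ (F A) u)) (F (insert w A))] at z1
        rw [dist_comm' G (med hmed v₀ (F A) u)
            (med hmed v₀ (F (insert w A)) (med hmed v₀ (F A) u)),
          dist_comm' G (med hmed v₀ (F (insert w A)) (med hmed v₀ (F A) u)) v₀,
          dist_comm' G (med hmed v₀ (F A) u) v₀] at z3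
        omega
      obtain ⟨hz1, hz2, hz3⟩ := hz
      have hzu : G.dist (med hmed v₀ (F (insert w A)) (med hmed v₀ (F A) u)) u = A.card + 1 := by
        have t1 : G.dist (med hmed v₀ (F (insert w A)) (med hmed v₀ (F A) u)) u ≤
            G.dist (med hmed v₀ (F (insert w A)) (med hmed v₀ (F A) u)) (med hmed v₀ (F A) u) +
              G.dist (med hmed v₀ (F A) u) u := hmed.1.dist_triangle
        have t2 : G.dist (F (insert w A)) u ≤
            G.dist (F (insert w A)) (med hmed v₀ (F (insert w A)) (med hmed v₀ (F A) u)) +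
              G.dist (med hmed v₀ (F (insert w A)) (med hmed v₀ (F A) u)) u :=
          hmed.1.dist_triangle
        omega
      have hkey : med hmed v₀ (F (insert w A)) (med hmed v₀ (F A) u) =
          med hmed v₀ (F (insert w A)) u := by
        apply med_eq hmed
        · rw [dist_comm' G (med hmed v₀ (F (insert w A)) (med hmed v₀ (F A) u)) (F (insert w A)),
            hz1]
          omega
        · rw [hz1, hzu, dyu]; omega
        · rw [dist_comm' G u (med hmed v₀ (F (insert w A)) (med hmed v₀ (F A) u)), hzu,
            dist_comm' G (med hmed v₀ (F (insert w A)) (med hmed v₀ (F A) u)) v₀,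
            dist_comm' G u v₀]
          omega
      rw [← hkey, dist_comm' G (med hmed v₀ (F A) u)
        (med hmed v₀ (F (insert w A)) (med hmed v₀ (F A) u))]
      exact hz2
    -- Step 3b : homomorphism bound for lowered vertices
    have mhom : ∀ n (A B : Finset V), A ⊆ W' → B ⊆ W' → (symmDiff A B).card = n →
        G.dist (med hmed v₀ (F A) u) (med hmed v₀ (F B) u) ≤ n := by
      intro n
      induction n with
      | zero =>
        intro A B hA hB hc
        have : A = B := symmDiff_eq_bot.mp (Finset.card_eq_zero.mp hc)
        subst this
        rw [SimpleGraph.dist_self]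
      | succ n ihn =>
        intro A B hA hB hc
        have hne : symmDiff A B ≠ ∅ := by
          intro h; rw [h] at hc; simp at hc
        obtain ⟨w, hw⟩ := Finset.nonempty_iff_ne_empty.mpr hne
        rw [Finset.mem_symmDiff] at hw
        rcases hw with ⟨hwA, hwB⟩ | ⟨hwB, hwA⟩
        · -- w ∈ A \ B : step from A to A.erase w
          have hAe : A.erase w ⊆ W' := (Finset.erase_subset _ _).trans hA
          have hstep : G.dist (med hmed v₀ (F (A.erase w)) u) (med hmed v₀ (F A) u) = 1 := by
            have := madj (A.erase w) hAe w (hA hwA) (Finset.notMem_erase w A)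
            rwa [Finset.insert_erase hwA] at this
          have hrec : G.dist (med hmed v₀ (F (A.erase w)) u) (med hmed v₀ (F B) u) ≤ n := by
            apply ihn _ _ hAe hB
            rw [sd_erase_left hwA hwB]
            have : w ∈ symmDiff A B := Finset.mem_symmDiff.mpr (Or.inl ⟨hwA, hwB⟩)
            have := Finset.card_erase_add_one this
            omega
          have t : G.dist (med hmed v₀ (F A) u) (med hmed v₀ (F B) u) ≤
              G.dist (med hmed v₀ (F A) u) (med hmed v₀ (F (A.erase w)) u) +
                G.dist (med hmed v₀ (F (A.erase w)) u) (med hmed v₀ (F B) u) :=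
            hmed.1.dist_triangle
          rw [dist_comm' G (med hmed v₀ (F A) u) (med hmed v₀ (F (A.erase w)) u)] at t
          omega
        · -- w ∈ B \ A : step from A to insert w A
          have hAi : insert w A ⊆ W' := Finset.insert_subset (hB hwB) hA
          have hstep : G.dist (med hmed v₀ (F A) u) (med hmed v₀ (F (insert w A)) u) = 1 :=
            madj A hA w (hB hwB) hwA
          have hrec : G.dist (med hmed v₀ (F (insert w A)) u) (med hmed v₀ (F B) u) ≤ n := by
            apply ihn _ _ hAi hB
            rw [sd_insert_left hwA hwB]
            have : w ∈ symmDiff A B := Finset.mem_symmDiff.mpr (Or.inr ⟨hwB, hwA⟩)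
            have := Finset.card_erase_add_one this
            omega
          have t : G.dist (med hmed v₀ (F A) u) (med hmed v₀ (F B) u) ≤
              G.dist (med hmed v₀ (F A) u) (med hmed v₀ (F (insert w A)) u) +
                G.dist (med hmed v₀ (F (insert w A)) u) (med hmed v₀ (F B) u) :=
            hmed.1.dist_triangle
          omega
    -- Step 4 : distance from cube vertices to lowered vertices
    have alpha : ∀ n (A B : Finset V), A ⊆ W' → B ⊆ W' → (symmDiff A B).card = n →
        G.dist (F A) (med hmed v₀ (F B) u) = n + 1 := by
      intro n
      induction n using Nat.strong_induction_on with
      | _ n ihn =>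
      intro A B hA hB hc
      obtain ⟨mb1, mb2, mb3⟩ := mprop B hB
      have hAB : G.dist (F A) (F B) = n := hc ▸ hFd A B hA hB
      have hub : G.dist (F A) (med hmed v₀ (F B) u) ≤
          G.dist (F A) (F B) + G.dist (F B) (med hmed v₀ (F B) u) := hmed.1.dist_triangle
      have hlb : G.dist (F A) (F B) ≤
          G.dist (F A) (med hmed v₀ (F B) u) + G.dist (med hmed v₀ (F B) u) (F B) :=
        hmed.1.dist_triangle
      rw [dist_comm' G (med hmed v₀ (F B) u) (F B)] at hlb
      have hpar := dist_parity hmed v₀ (F A) (med hmed v₀ (F B) u)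
      have hsdp := sd_card_parity A B
      have hrA := hFr A hA
      by_contra hbad
      have hd : G.dist (F A) (med hmed v₀ (F B) u) + 1 = n := by omega
      have hsum : (A \ B).card + (B \ A).card = n := by rw [← sd_card]; exact hc
      have hcards1 := Finset.card_sdiff_add_card_inter A B
      have hcards2 := Finset.card_sdiff_add_card_inter B A
      rw [Finset.inter_comm] at hcards2
      rcases Nat.lt_or_ge (A \ B).card 2 with hsmall | hbig
      · rcases Nat.eq_zero_or_pos (A \ B).card with h0 | h1
        · -- A ⊆ B : impossible by ranks
          have t : G.dist v₀ (F A) ≤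
              G.dist v₀ (med hmed v₀ (F B) u) + G.dist (med hmed v₀ (F B) u) (F A) :=
            hmed.1.dist_triangle
          rw [dist_comm' G (med hmed v₀ (F B) u) (F A)] at t
          omega
        · obtain ⟨w, hwsd⟩ := Finset.card_eq_one.mp (by omega : (A \ B).card = 1)
          have hw : w ∈ A \ B := hwsd ▸ Finset.mem_singleton_self w
          rw [Finset.mem_sdiff] at hw
          obtain ⟨hwA, hwB⟩ := hw
          have hwAB : w ∈ symmDiff A B := Finset.mem_symmDiff.mpr (Or.inl ⟨hwA, hwB⟩)
          rcases Nat.eq_zero_or_pos (B \ A).card with hb0 | hb1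
          · -- B ⊆ A, n = 1, would give F A = lowered B
            have heq : F A = med hmed v₀ (F B) u := hmed.1.dist_eq_zero_iff.mp (by omega)
            have g : G.dist (F A) u = A.card + 1 := good A.card A hA rfl
            rw [heq, mb2] at g
            omega
          · -- the lateral median case
            obtain ⟨w', hw'⟩ := Finset.card_pos.mp hb1
            rw [Finset.mem_sdiff] at hw'
            obtain ⟨hw'B, hw'A⟩ := hw'
            have hw'AB : w' ∈ symmDiff A B := Finset.mem_symmDiff.mpr (Or.inr ⟨hw'B, hw'A⟩)
            have hww' : w ≠ w' := fun h => hw'A (h ▸ hwA)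
            have hw'Ae : w' ∉ A.erase w := fun h => hw'A (Finset.mem_of_mem_erase h)
            have hAe : A.erase w ⊆ W' := (Finset.erase_subset _ _).trans hA
            have hAi : insert w' A ⊆ W' := Finset.insert_subset (hB hw'B) hA
            have hAei : insert w' (A.erase w) ⊆ W' := Finset.insert_subset (hB hw'B) hAe
            -- symmetric difference computations
            have s1 : symmDiff (A.erase w) B = (symmDiff A B).erase w :=
              sd_erase_left hwA hwB
            have s2 : symmDiff (insert w' A) B = (symmDiff A B).erase w' :=
              sd_insert_left hw'A hw'B
            have s12 : symmDiff (insert w' (A.erase w)) B =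
                ((symmDiff A B).erase w).erase w' := by
              rw [sd_insert_left hw'Ae hw'B, s1]
            have hw'e : w' ∈ (symmDiff A B).erase w :=
              Finset.mem_erase.mpr ⟨fun h => hww' h.symm, hw'AB⟩
            have c1 : (symmDiff (A.erase w) B).card + 1 = n := by
              rw [s1]; rw [Finset.card_erase_add_one hwAB]; exact hc
            have c2 : (symmDiff (insert w' A) B).card + 1 = n := by
              rw [s2]; rw [Finset.card_erase_add_one hw'AB]; exact hc
            have c12 : (symmDiff (insert w' (A.erase w)) B).card + 2 = n := by
              rw [s12]
              have e1 := Finset.card_erase_add_one hw'e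
              have e2 := Finset.card_erase_add_one hwAB
              omega
            have d1 : G.dist (F (A.erase w)) (med hmed v₀ (F B) u) = n := by
              have := ihn _ (by omega) (A.erase w) B hAe hB rfl
              omega
            have d2 : G.dist (F (insert w' A)) (med hmed v₀ (F B) u) = n := by
              have := ihn _ (by omega) (insert w' A) B hAi hB rfl
              omega
            have d12 : G.dist (F (insert w' (A.erase w))) (med hmed v₀ (F B) u) + 1 = n := by
              have := ihn _ (by omega) (insert w' (A.erase w)) B hAei hB rfl
              omega
            -- cube distances
            have e1y : G.dist (F (A.erase w)) (F A) = 1 := by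
              rw [hFd _ _ hAe hA, sd_erase_self hwA]; exact Finset.card_singleton w
            have e2y : G.dist (F (insert w' A)) (F A) = 1 := by
              rw [hFd _ _ hAi hA, sd_insert_new hw'A hw'A, sd_self']
              exact Finset.card_singleton w'
            have e12 : G.dist (F (A.erase w)) (F (insert w' A)) = 2 := by
              rw [hFd _ _ hAe hAi, symmDiff_comm, sd_insert_new hw'A hw'Ae,
                symmDiff_comm, sd_erase_self hwA]
              rw [Finset.card_insert_of_notMem (by simp [Ne.symm hww'])]
              rfl
            have e1_12 : G.dist (F (A.erase w)) (F (insert w' (A.erase w))) = 1 := by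
              rw [hFd _ _ hAe hAei, symmDiff_comm, sd_insert_new hw'Ae hw'Ae, sd_self']
              exact Finset.card_singleton w'
            have e2_12 : G.dist (F (insert w' A)) (F (insert w' (A.erase w))) = 1 := by
              rw [hFd _ _ hAi hAei, sd_erase_both (Finset.mem_insert_self w' A)
                  (Finset.mem_insert_self w' (A.erase w)),
                Finset.erase_insert hw'A, Finset.erase_insert hw'Ae,
                symmDiff_comm, sd_erase_self hwA]
              exact Finset.card_singleton w
            have ey12 : G.dist (F A) (F (insert w' (A.erase w))) = 2 := by
              rw [hFd _ _ hA hAei, symmDiff_comm, sd_insert_new hw'Ae hw'A,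
                sd_erase_self hwA]
              rw [Finset.card_insert_of_notMem (by simp [Ne.symm hww'])]
              rfl
            have hmedy : F A = med hmed (F (A.erase w)) (F (insert w' A))
                (med hmed v₀ (F B) u) := by
              apply med_eq hmed
              · rw [e1y, dist_comm' G (F A) (F (insert w' A)), e2y, e12]
              · rw [e2y, d2]; omega
              · rw [dist_comm' G (med hmed v₀ (F B) u) (F A),
                  dist_comm' G (F A) (F (A.erase w)), e1y,
                  dist_comm' G (med hmed v₀ (F B) u) (F (A.erase w)), d1]
                omega
            have hmedx : F (insert w' (A.erase w)) = med hmed (F (A.erase w))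
                (F (insert w' A)) (med hmed v₀ (F B) u) := by
              apply med_eq hmed
              · rw [e1_12, dist_comm' G (F (insert w' (A.erase w))) (F (insert w' A)),
                  e2_12, e12]
              · rw [e2_12, d2]; omega
              · rw [dist_comm' G (med hmed v₀ (F B) u) (F (insert w' (A.erase w))),
                  dist_comm' G (F (insert w' (A.erase w))) (F (A.erase w)),
                  e1_12, dist_comm' G (med hmed v₀ (F B) u) (F (A.erase w)), d1]
                omega
            have heq : F A = F (insert w' (A.erase w)) := by rw [hmedy, hmedx]
            rw [heq, SimpleGraph.dist_self] at ey12
            omega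
      · -- two deleted coordinates : the downward median case
        obtain ⟨w1, hw1', w2, hw2', hne12⟩ := Finset.one_lt_card.mp hbig
        rw [Finset.mem_sdiff] at hw1' hw2'
        obtain ⟨hw1A, hw1B⟩ := hw1'
        obtain ⟨hw2A, hw2B⟩ := hw2'
        have hw1AB : w1 ∈ symmDiff A B := Finset.mem_symmDiff.mpr (Or.inl ⟨hw1A, hw1B⟩)
        have hw2AB : w2 ∈ symmDiff A B := Finset.mem_symmDiff.mpr (Or.inl ⟨hw2A, hw2B⟩)
        have hw2e : w2 ∈ A.erase w1 := Finset.mem_erase.mpr ⟨Ne.symm hne12, hw2A⟩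
        have hw2eB : w2 ∉ B := hw2B
        have hA1 : A.erase w1 ⊆ W' := (Finset.erase_subset _ _).trans hA
        have hA2 : A.erase w2 ⊆ W' := (Finset.erase_subset _ _).trans hA
        have hA12 : (A.erase w1).erase w2 ⊆ W' := (Finset.erase_subset _ _).trans hA1
        have s1 : symmDiff (A.erase w1) B = (symmDiff A B).erase w1 :=
          sd_erase_left hw1A hw1B
        have s2 : symmDiff (A.erase w2) B = (symmDiff A B).erase w2 :=
          sd_erase_left hw2A hw2B
        have s12 : symmDiff ((A.erase w1).erase w2) B =
            ((symmDiff A B).erase w1).erase w2 := by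
          rw [sd_erase_left hw2e hw2eB, s1]
        have hw2e1 : w2 ∈ (symmDiff A B).erase w1 :=
          Finset.mem_erase.mpr ⟨Ne.symm hne12, hw2AB⟩
        have c1 : (symmDiff (A.erase w1) B).card + 1 = n := by
          rw [s1, Finset.card_erase_add_one hw1AB]; exact hc
        have c2 : (symmDiff (A.erase w2) B).card + 1 = n := by
          rw [s2, Finset.card_erase_add_one hw2AB]; exact hc
        have c12 : (symmDiff ((A.erase w1).erase w2) B).card + 2 = n := by
          rw [s12]
          have e1 := Finset.card_erase_add_one hw2e1
          have e2 := Finset.card_erase_add_one hw1AB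
          omega
        have d1 : G.dist (F (A.erase w1)) (med hmed v₀ (F B) u) = n := by
          have := ihn _ (by omega) (A.erase w1) B hA1 hB rfl
          omega
        have d2 : G.dist (F (A.erase w2)) (med hmed v₀ (F B) u) = n := by
          have := ihn _ (by omega) (A.erase w2) B hA2 hB rfl
          omega
        have d12 : G.dist (F ((A.erase w1).erase w2)) (med hmed v₀ (F B) u) + 1 = n := by
          have := ihn _ (by omega) ((A.erase w1).erase w2) B hA12 hB rfl
          omega
        have e1A : G.dist (F (A.erase w1)) (F A) = 1 := by
          rw [hFd _ _ hA1 hA, sd_erase_self hw1A]; exact Finset.card_singleton w1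
        have e2A : G.dist (F (A.erase w2)) (F A) = 1 := by
          rw [hFd _ _ hA2 hA, sd_erase_self hw2A]; exact Finset.card_singleton w2
        have e12 : G.dist (F (A.erase w1)) (F (A.erase w2)) = 2 := by
          rw [hFd _ _ hA1 hA2, sd_two hw1A hw2A hne12]; exact Finset.card_pair hne12
        have e1_12 : G.dist (F (A.erase w1)) (F ((A.erase w1).erase w2)) = 1 := by
          rw [hFd _ _ hA1 hA12, symmDiff_comm, sd_erase_self hw2e]
          exact Finset.card_singleton w2
        have e2_12 : G.dist (F (A.erase w2)) (F ((A.erase w1).erase w2)) = 1 := by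
          rw [hFd _ _ hA2 hA12]
          rw [show (A.erase w1).erase w2 = (A.erase w2).erase w1 from Finset.erase_right_comm]
          rw [symmDiff_comm, sd_erase_self (Finset.mem_erase.mpr ⟨hne12, hw1A⟩)]
          exact Finset.card_singleton w1
        have hmedy : F A = med hmed (F (A.erase w1)) (F (A.erase w2))
            (med hmed v₀ (F B) u) := by
          apply med_eq hmed
          · rw [e12, e1A, dist_comm' G (F A) (F (A.erase w2)), e2A]
          · rw [e2A, d2]; omega
          · rw [dist_comm' G (med hmed v₀ (F B) u) (F A),
              dist_comm' G (F A) (F (A.erase w1)), e1A,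
              dist_comm' G (med hmed v₀ (F B) u) (F (A.erase w1)), d1]
            omega
        have hmedx : F ((A.erase w1).erase w2) = med hmed (F (A.erase w1))
            (F (A.erase w2)) (med hmed v₀ (F B) u) := by
          apply med_eq hmed
          · rw [e12, e1_12, dist_comm' G (F ((A.erase w1).erase w2)) (F (A.erase w2)),
              e2_12]
          · rw [e2_12, d2]; omega
          · rw [dist_comm' G (med hmed v₀ (F B) u) (F ((A.erase w1).erase w2)),
              dist_comm' G (F ((A.erase w1).erase w2)) (F (A.erase w1)), e1_12,
              dist_comm' G (med hmed v₀ (F B) u) (F (A.erase w1)), d1]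
            omega
        have heq : F A = F ((A.erase w1).erase w2) := by rw [hmedy, hmedx]
        have hr12 : G.dist v₀ (F ((A.erase w1).erase w2)) + ((A.erase w1).erase w2).card =
            G.dist v₀ v := hFr _ hA12
        rw [← heq] at hr12
        have hcc1 := Finset.card_erase_add_one hw1A
        have hcc2 := Finset.card_erase_add_one hw2e
        omega
    -- Step 5 : distances between lowered vertices
    have beta : ∀ (A B : Finset V), A ⊆ W' → B ⊆ W' →
        G.dist (med hmed v₀ (F A) u) (med hmed v₀ (F B) u) = (symmDiff A B).card := by
      intro A B hA hB
      have h1 := mhom (symmDiff A B).card A B hA hB rfl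
      have h2 := alpha (symmDiff A B).card A B hA hB rfl
      have ma1 := (mprop A hA).1
      have t : G.dist (F A) (med hmed v₀ (F B) u) ≤
          G.dist (F A) (med hmed v₀ (F A) u) +
            G.dist (med hmed v₀ (F A) u) (med hmed v₀ (F B) u) := hmed.1.dist_triangle
      omega
    -- Assembly
    refine ⟨fun A => if u ∈ A then med hmed v₀ (F (A.erase u)) u else F A, ?_, ?_, ?_, ?_⟩
    · beta_reduce
      rw [if_neg (Finset.notMem_empty u)]; exact hF0
    · intro w hw
      beta_reduce
      rcases Finset.mem_insert.mp hw with rfl | hwW'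
      · rw [if_pos (Finset.mem_singleton_self w), Finset.erase_singleton]
        exact m_empty
      · have hne : u ∉ ({w} : Finset V) := by
          simp only [Finset.mem_singleton]
          exact fun h => hu (h ▸ hwW')
        rw [if_neg hne]
        exact hF1 w hwW'
    · intro A B hA hB
      beta_reduce
      have hA' : A.erase u ⊆ W' := Finset.subset_insert_iff.mp hA
      have hB' : B.erase u ⊆ W' := Finset.subset_insert_iff.mp hB
      by_cases huA : u ∈ A <;> by_cases huB : u ∈ B
      · rw [if_pos huA, if_pos huB, beta _ _ hA' hB', ← sd_erase_both huA huB]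
      · rw [if_pos huA, if_neg huB,
          dist_comm' G (med hmed v₀ (F (A.erase u)) u) (F B),
          alpha (symmDiff B (A.erase u)).card B (A.erase u)
            (by rwa [Finset.erase_eq_self.mpr huB] at hB') hA' rfl]
        have e : symmDiff B (A.erase u) = (symmDiff A B).erase u := by
          rw [symmDiff_comm, sd_erase_left huA huB]
        rw [e, Finset.card_erase_add_one (Finset.mem_symmDiff.mpr (Or.inl ⟨huA, huB⟩))]
      · rw [if_neg huA, if_pos huB,
          alpha (symmDiff A (B.erase u)).card A (B.erase u)
            (by rwa [Finset.erase_eq_self.mpr huA] at hA') hB' rfl]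
        have e : symmDiff A (B.erase u) = (symmDiff A B).erase u := by
          rw [symmDiff_comm, sd_erase_left huB huA, symmDiff_comm]
        rw [e, Finset.card_erase_add_one (Finset.mem_symmDiff.mpr (Or.inr ⟨huB, huA⟩))]
      · rw [if_neg huA, if_neg huB]
        exact hFd A B (by rwa [Finset.erase_eq_self.mpr huA] at hA')
          (by rwa [Finset.erase_eq_self.mpr huB] at hB')
    · intro A hA
      beta_reduce
      have hA' : A.erase u ⊆ W' := Finset.subset_insert_iff.mp hA
      by_cases huA : u ∈ A
      · rw [if_pos huA]
        have h := (mprop _ hA').2.2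
        have := Finset.card_erase_add_one huA
        omega
      · rw [if_neg huA]
        exact hFr A (by rwa [Finset.erase_eq_self.mpr huA] at hA')
end Cube


section Rest
variable {G : SimpleGraph V}

lemma theta0_symm {e f : Sym2 V} (h : Theta0 G e f) : Theta0 G f e := by
  obtain ⟨u, v, x, y, ⟨h1, h2, h3, h4, h5, h6⟩, he, hf⟩ := h
  exact ⟨x, y, u, v, ⟨h2, h1, h3.symm, h4.symm, h6.symm, h5.symm⟩, hf, he⟩

lemma theta_symm {e f : Sym2 V} (h : Theta G e f) : Theta G f e :=
  ⟨h.2.1, h.1, by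
    haveI : Std.Symm (Theta0 G) := ⟨fun _ _ hh => theta0_symm hh⟩
    exact Relation.ReflTransGen.symmetric.symm _ _ h.2.2⟩

lemma theta_trans {e f g : Sym2 V} (h1 : Theta G e f) (h2 : Theta G f g) : Theta G e g :=
  ⟨h1.1, h2.2.1, h1.2.2.trans h2.2.2⟩

lemma theta_class_eq {e e' g : Sym2 V} (hg : Theta G e g) (hg' : Theta G e' g) :
    {f | Theta G e f} = {f | Theta G e' f} := by
  ext f
  exact ⟨fun hf => theta_trans hg' (theta_trans (theta_symm hg) hf),
    fun hf => theta_trans hg (theta_trans (theta_symm hg') hf)⟩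

lemma class_extend {C : Set (Sym2 V)} {g h : Sym2 V} (hTC : ThetaClass G C)
    (hg : g ∈ C) (h0 : Theta0 G g h) (hE : h ∈ G.edgeSet) : h ∈ C := by
  obtain ⟨e, he, rfl⟩ := hTC
  exact ⟨hg.1, hE, hg.2.2.tail h0⟩

lemma inClasses_pof (hmed : MedianGraph G) (v₀ v : V) : IsPOF G (inClasses G v₀ v) := by
  constructor
  · intro C hC; exact hC.1
  · intro C hC C' hC' hne
    obtain ⟨hTC, w, hadjw, hltw, hmemw⟩ := hC
    obtain ⟨hTC', w', hadjw', hltw', hmemw'⟩ := hC'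
    have hne_w : w ≠ w' := by
      rintro rfl
      apply hne
      obtain ⟨e, he, rfl⟩ := hTC
      obtain ⟨e', he', rfl⟩ := hTC'
      exact theta_class_eq hmemw hmemw'
    have hr : G.dist v₀ w + 1 = G.dist v₀ v := by
      have := adj_dist_succ hmed hadjw v₀; omega
    have hr' : G.dist v₀ w' + 1 = G.dist v₀ v := by
      have := adj_dist_succ hmed hadjw' v₀; omega
    obtain ⟨hd2, hz1, hz2, hzr⟩ := downward_square hmed v₀ hadjw hadjw' hr hr' hne_w
    have hzv : med hmed v₀ w w' ≠ v := by
      intro h; rw [h] at hzr; omega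
    have sq1 : IsSquare G w v (med hmed v₀ w w') w' :=
      ⟨hadjw, hz2, hz1.symm, hadjw'.symm, hne_w, fun h => hzv h.symm⟩
    have sq2 : IsSquare G w' v (med hmed v₀ w w') w :=
      ⟨hadjw', hz1, hz2.symm, hadjw.symm, hne_w.symm, fun h => hzv h.symm⟩
    have hcz : s(med hmed v₀ w w', w') ∈ C := by
      refine class_extend hTC hmemw ⟨w, v, _, w', sq1, rfl, rfl⟩ ?_
      rw [SimpleGraph.mem_edgeSet]; exact hz2
    have hcz' : s(med hmed v₀ w w', w) ∈ C' := by
      refine class_extend hTC' hmemw' ⟨w', v, _, w, sq2, rfl, rfl⟩ ?_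
      rw [SimpleGraph.mem_edgeSet]; exact hz1
    refine ⟨w, v, med hmed v₀ w w', w', sq1, hmemw, hcz, ?_, ?_⟩
    · rw [Sym2.eq_swap]; exact hcz'
    · rw [Sym2.eq_swap]; exact hmemw'

end Rest

/-- In a median graph with basepoint `v₀`, for every vertex `v` the
set `ℰ⁻(v)` of Θ-classes of ingoing edges is a POF, and `v` together with all
its ingoing edges lies in an induced hypercube with Θ-classes exactly `ℰ⁻(v)`
and anti-basis `v`. -/
theorem inClasses_pof_and_cube {V : Type*} [Fintype V] (G : SimpleGraph V)
    (hmed : MedianGraph G) (v₀ v : V) :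
    IsPOF G (inClasses G v₀ v) ∧
    ∃ S : Set V, IsInducedCube G S ∧ v ∈ S ∧
      (∀ u, G.Adj u v → G.dist v₀ u < G.dist v₀ v → u ∈ S) ∧
      cubeClasses G S = inClasses G v₀ v ∧
      IsAntiBasis G v₀ S v := by
  classical
  refine ⟨inClasses_pof hmed v₀ v, ?_⟩
  set W := (Finset.univ : Finset V).filter
    (fun u => G.Adj u v ∧ G.dist v₀ u < G.dist v₀ v) with hWdef
  have hWmem : ∀ u, u ∈ W ↔ (G.Adj u v ∧ G.dist v₀ u < G.dist v₀ v) := by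
    intro u; simp [hWdef]
  have hW : ∀ u ∈ W, G.Adj u v ∧ G.dist v₀ u + 1 = G.dist v₀ v := by
    intro u hu
    rw [hWmem] at hu
    exact ⟨hu.1, by have := adj_dist_succ hmed hu.1 v₀; omega⟩
  obtain ⟨F, hF0, hF1, hFd, hFr⟩ := cube_family hmed v₀ v W hW
  have hadjiff : ∀ A B : Finset V, A ⊆ W → B ⊆ W →
      (G.Adj (F A) (F B) ↔ (symmDiff A B).card = 1) := by
    intro A B hA hB
    rw [← SimpleGraph.dist_eq_one_iff_adj, hFd A B hA hB]
  have hinj : ∀ A B : Finset V, A ⊆ W → B ⊆ W → F A = F B → A = B := by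
    intro A B hA hB h
    have hd := hFd A B hA hB
    rw [h, SimpleGraph.dist_self] at hd
    exact symmDiff_eq_bot.mp (Finset.card_eq_zero.mp hd.symm)
  -- the Θ-chain inside the cube
  have chain : ∀ n (A : Finset V), A ⊆ W → A.card = n → ∀ w ∈ W, w ∉ A →
      Relation.ReflTransGen (Theta0 G) s(F (insert w A), F A) s(w, v) := by
    intro n
    induction n using Nat.strong_induction_on with
    | _ n ihn =>
    intro A hA hcard w hwW hwA
    rcases Nat.eq_zero_or_pos n with h0 | hpos
    · have hAe : A = ∅ := Finset.card_eq_zero.mp (by omega)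
      subst hAe
      rw [Finset.insert_empty, hF1 w hwW, hF0]
    · obtain ⟨j, hj⟩ := Finset.card_pos.mp (show 0 < A.card by omega)
      have hjW : j ∈ W := hA hj
      have hwj : w ≠ j := fun h => hwA (h ▸ hj)
      have hwAe : w ∉ A.erase j := fun h => hwA (Finset.mem_of_mem_erase h)
      have hA' : A.erase j ⊆ W := (Finset.erase_subset _ _).trans hA
      have hins : insert w A ⊆ W := Finset.insert_subset hwW hA
      have hins' : insert w (A.erase j) ⊆ W := Finset.insert_subset hwW hA'
      have hadjX : ∀ X Y : Finset V, X ⊆ W → Y ⊆ W → (symmDiff X Y).card = 1 →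
          G.Adj (F X) (F Y) := by
        intro X Y hX hY hc
        exact (hadjiff X Y hX hY).mpr hc
      have hneX : ∀ X Y : Finset V, X ⊆ W → Y ⊆ W → (symmDiff X Y).card = 2 →
          F X ≠ F Y := by
        intro X Y hX hY hc h
        have hd := hFd X Y hX hY
        rw [h, SimpleGraph.dist_self, hc] at hd
        omega
      have sdc1 : symmDiff (insert w A) A = {w} := by
        rw [sd_insert_new hwA hwA, sd_self']; rfl
      have sdc4 : symmDiff A (A.erase j) = {j} := by
        rw [symmDiff_comm, sd_erase_self hj]
      have sdc2 : symmDiff (insert w (A.erase j)) (A.erase j) = {w} := by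
        rw [sd_insert_new hwAe hwAe, sd_self']; rfl
      have sdc3 : symmDiff (insert w A) (insert w (A.erase j)) = {j} := by
        rw [sd_erase_both (Finset.mem_insert_self w A)
            (Finset.mem_insert_self w (A.erase j)),
          Finset.erase_insert hwA, Finset.erase_insert hwAe, sdc4]
      have sdc5 : symmDiff (insert w A) (A.erase j) = insert w {j} := by
        rw [sd_insert_new hwA hwAe, sdc4]
      have sdc6 : symmDiff A (insert w (A.erase j)) = insert w {j} := by
        rw [symmDiff_comm, sd_insert_new hwAe hwA, symmDiff_comm, sdc4]
      have hcard2 : (insert w ({j} : Finset V)).card = 2 := by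
        rw [Finset.card_insert_of_notMem (by simp [hwj])]; rfl
      have sq : IsSquare G (F (insert w A)) (F A) (F (insert w (A.erase j)))
          (F (A.erase j)) := by
        refine ⟨hadjX _ _ hins hA (by rw [sdc1]; rfl),
          hadjX _ _ hins' hA' (by rw [sdc2]; rfl),
          hadjX _ _ hins hins' (by rw [sdc3]; rfl),
          hadjX _ _ hA hA' (by rw [sdc4]; rfl),
          hneX _ _ hins hA' (by rw [sdc5]; exact hcard2),
          hneX _ _ hA hins' (by rw [sdc6]; exact hcard2)⟩
      have step : Theta0 G s(F (insert w A), F A)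
          s(F (insert w (A.erase j)), F (A.erase j)) :=
        ⟨_, _, _, _, sq, rfl, rfl⟩
      have hce : (A.erase j).card < n := by
        have := Finset.card_erase_add_one hj; omega
      exact Relation.ReflTransGen.head step
        (ihn (A.erase j).card hce (A.erase j) hA' rfl w hwW hwAe)
  refine ⟨F '' {A : Finset V | A ⊆ W}, ?_, ⟨∅, Finset.empty_subset W, hF0⟩, ?_, ?_, ?_⟩
  · -- induced cube
    refine ⟨Fintype.card {x // x ∈ W}, ?_⟩
    have e : {x // x ∈ W} ≃ Fin (Fintype.card {x // x ∈ W}) := Fintype.equivFin _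
    set n := Fintype.card {x // x ∈ W}
    have hembInj : Function.Injective (fun i : Fin n => ((e.symm i : {x // x ∈ W}) : V)) :=
      fun i j h => e.symm.injective (Subtype.ext h)
    have hιsub : ∀ A : Finset (Fin n),
        A.image (fun i => ((e.symm i : {x // x ∈ W}) : V)) ⊆ W := by
      intro A x hx
      rw [Finset.mem_image] at hx
      obtain ⟨i, _, rfl⟩ := hx
      exact (e.symm i).2
    have hιsd : ∀ A B : Finset (Fin n),
        symmDiff (A.image (fun i => ((e.symm i : {x // x ∈ W}) : V)))
          (B.image (fun i => ((e.symm i : {x // x ∈ W}) : V))) =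
        (symmDiff A B).image (fun i => ((e.symm i : {x // x ∈ W}) : V)) :=
      fun A B => (Finset.image_symmDiff A B hembInj).symm
    have hψmem : ∀ A : Finset (Fin n),
        F (A.image (fun i => ((e.symm i : {x // x ∈ W}) : V))) ∈
          F '' {A : Finset V | A ⊆ W} := fun A => ⟨_, hιsub A, rfl⟩
    have hbij : Function.Bijective
        (fun A : Finset (Fin n) =>
          (⟨F (A.image (fun i => ((e.symm i : {x // x ∈ W}) : V))), hψmem A⟩ :
            {x // x ∈ F '' {A : Finset V | A ⊆ W}})) := by
      constructor
      · intro A B h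
        rw [Subtype.mk.injEq] at h
        have him := hinj _ _ (hιsub A) (hιsub B) h
        ext i
        constructor
        · intro hi
          have : ((e.symm i : {x // x ∈ W}) : V) ∈
              B.image (fun i => ((e.symm i : {x // x ∈ W}) : V)) := by
            rw [← him]
            exact Finset.mem_image_of_mem _ hi
          rw [Finset.mem_image] at this
          obtain ⟨i', hi', hei⟩ := this
          have : i' = i := hembInj hei
          exact this ▸ hi'
        · intro hi
          have : ((e.symm i : {x // x ∈ W}) : V) ∈
              A.image (fun i => ((e.symm i : {x // x ∈ W}) : V)) := by
            rw [him]
            exact Finset.mem_image_of_mem _ hi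
          rw [Finset.mem_image] at this
          obtain ⟨i', hi', hei⟩ := this
          have : i' = i := hembInj hei
          exact this ▸ hi'
      · rintro ⟨x, hx⟩
        obtain ⟨B, hB, rfl⟩ := hx
        refine ⟨Finset.univ.filter (fun i => ((e.symm i : {x // x ∈ W}) : V) ∈ B),
          Subtype.ext ?_⟩
        show F _ = F B
        congr 1
        ext x
        rw [Finset.mem_image]
        constructor
        · rintro ⟨i, hi, rfl⟩
          exact (Finset.mem_filter.mp hi).2
        · intro hx
          refine ⟨e ⟨x, hB hx⟩, Finset.mem_filter.mpr ⟨Finset.mem_univ _, ?_⟩, ?_⟩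
          · rw [Equiv.symm_apply_apply]; exact hx
          · rw [Equiv.symm_apply_apply]
    exact ⟨(SimpleGraph.Iso.symm
      { toEquiv := Equiv.ofBijective _ hbij
        map_rel_iff' := by
          intro A B
          show G.Adj (F (A.image (fun i => ((e.symm i : {x // x ∈ W}) : V))))
              (F (B.image (fun i => ((e.symm i : {x // x ∈ W}) : V)))) ↔
            (symmDiff A B).card = 1
          rw [hadjiff _ _ (hιsub A) (hιsub B), hιsd,
            Finset.card_image_of_injective _ hembInj] })⟩
  · -- all ingoing neighbours are in the cube
    intro u hadj hlt
    have huW : u ∈ W := (hWmem u).mpr ⟨hadj, hlt⟩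
    exact ⟨{u}, Finset.singleton_subset_iff.mpr huW, hF1 u huW⟩
  · -- the Θ-classes of the cube are exactly the ingoing classes
    apply Set.ext
    intro C
    constructor
    · rintro ⟨hTC, x, hxS, y, hyS, hxy, hmemC⟩
      obtain ⟨A, hA, rfl⟩ := hxS
      obtain ⟨B, hB, rfl⟩ := hyS
      rw [Set.mem_setOf_eq] at hA hB
      have hcard1 : (symmDiff A B).card = 1 := (hadjiff A B hA hB).mp hxy
      obtain ⟨w, hwsd⟩ := Finset.card_eq_one.mp hcard1
      have hwmem : w ∈ symmDiff A B := hwsd ▸ Finset.mem_singleton_self w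
      have hsingle : ∀ x, x ∈ symmDiff A B → x = w := by
        intro x hx; rw [hwsd, Finset.mem_singleton] at hx; exact hx
      have hkey : w ∈ W ∧ Relation.ReflTransGen (Theta0 G) s(F A, F B) s(w, v) := by
        rw [Finset.mem_symmDiff] at hwmem
        rcases hwmem with ⟨hwA, hwB⟩ | ⟨hwB, hwA⟩
        · have hBA : B = A.erase w := by
            ext x
            rw [Finset.mem_erase]
            constructor
            · intro hx
              refine ⟨fun h => hwB (h ▸ hx), ?_⟩
              by_contra hxA
              exact hwB ((hsingle x (Finset.mem_symmDiff.mpr (Or.inr ⟨hx, hxA⟩))) ▸ hx)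
            · rintro ⟨hxw, hxA⟩
              by_contra hxB
              exact hxw (hsingle x (Finset.mem_symmDiff.mpr (Or.inl ⟨hxA, hxB⟩)))
          have hAB : A = insert w B := by rw [hBA, Finset.insert_erase hwA]
          have hwB' : w ∉ B := hwB
          have hBW : B ⊆ W := hB
          have hch := chain B.card B hBW rfl w (hA hwA) hwB'
          rw [← hAB] at hch
          exact ⟨hA hwA, hch⟩
        · have hBA : A = B.erase w := by
            ext x
            rw [Finset.mem_erase]
            constructor
            · intro hx
              refine ⟨fun h => hwA (h ▸ hx), ?_⟩
              by_contra hxB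
              exact hwA ((hsingle x (Finset.mem_symmDiff.mpr (Or.inl ⟨hx, hxB⟩))) ▸ hx)
            · rintro ⟨hxw, hxB⟩
              by_contra hxA
              exact hxw (hsingle x (Finset.mem_symmDiff.mpr (Or.inr ⟨hxB, hxA⟩)))
          have hAB : B = insert w A := by rw [hBA, Finset.insert_erase hwB]
          have hch := chain A.card A hA rfl w (hB hwB) hwA
          rw [← hAB] at hch
          rw [show s(F A, F B) = s(F B, F A) from Sym2.eq_swap]
          exact ⟨hB hwB, hch⟩
      obtain ⟨hwW, hRTG⟩ := hkey
      obtain ⟨e', heE, rfl⟩ := hTC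
      have hth : Theta G e' s(w, v) := by
        refine ⟨heE, ?_, hmemC.2.2.trans hRTG⟩
        rw [SimpleGraph.mem_edgeSet]
        exact (hW w hwW).1
      exact ⟨⟨e', heE, rfl⟩, w, (hW w hwW).1,
        by have := (hW w hwW).2; omega, hth⟩
    · rintro ⟨hTC, w, hadjw, hltw, hmemw⟩
      have hwW : w ∈ W := (hWmem w).mpr ⟨hadjw, hltw⟩
      exact ⟨hTC, w, ⟨{w}, Finset.singleton_subset_iff.mpr hwW, hF1 w hwW⟩,
        v, ⟨∅, Finset.empty_subset W, hF0⟩, hadjw, hmemw⟩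
  · -- anti-basis
    refine ⟨⟨∅, Finset.empty_subset W, hF0⟩, ?_⟩
    rintro x ⟨A, hA, rfl⟩ hadjvF
    rw [Set.mem_setOf_eq] at hA
    rw [← hF0] at hadjvF
    have h1 : (symmDiff (∅ : Finset V) A).card = 1 :=
      (hadjiff ∅ A (Finset.empty_subset W) hA).mp hadjvF
    rw [symmDiff_comm, sd_empty] at h1
    obtain ⟨w, rfl⟩ := Finset.card_eq_one.mp h1
    have hwW : w ∈ W := Finset.singleton_subset_iff.mp hA
    rw [hF1 w hwW]
    have := (hW w hwW).2
    omega


end MedianPaper
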